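/- Let (X, d) be a geodesic metric space (every pair of points is joined by a path γ with dist(γ(s),γ(t)) = |s−t|), and let μ be a Borel measure on X which is finite and positive on all open balls and doubling: there is C_D ≥ 1 with μ(B(x,2r)) ≤ C_D · μ(B(x,r)) for all x and r > 0. Fix r₀ > 0, C₀ > 0 and R > 0. Then there exists a constant c > 0, depending only on C_D, C₀, r₀ and R, with the following property: whenever f : X → ℝ is integrable on balls and g : X → [0,∞) is square-integrable on balls and the pair (f,g) satisfies the (1,2)-Poincaré inequality at small scales, i.e., ⨍_{B(x,r)} |f − f_{B(x,r)}| dμ ≤ C₀ · r · ( ⨍_{B(x,2r)} g² dμ )^{1/2} for every x ∈ X and every 0 < r ≤ r₀, then for every x ∈ X and every 0 < r ≤ R one has ⨍_{B(x,r)} |f − f_{B(x,r)}| dμ ≤ c · r · ( ⨍_{B(x,2r)} g² dμ )^{1/2}. -/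

import Mathlib

open MeasureTheory Metric Set

section Helpers
variable {X : Type*} [MetricSpace X] [MeasurableSpace X] [BorelSpace X] {μ : Measure X}

/-- iterated doubling -/
lemma PIaux.doubling_pow {C_D : ℝ} (hCD : 1 ≤ C_D)
    (hdoub : ∀ (x : X) (r : ℝ), 0 < r → μ (ball x (2 * r)) ≤ ENNReal.ofReal C_D * μ (ball x r))
    (x : X) (s : ℝ) (hs : 0 < s) (m : ℕ) :
    μ (ball x ((2:ℝ)^m * s)) ≤ ENNReal.ofReal (C_D ^ m) * μ (ball x s) := by
  induction m with
  | zero => simp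
  | succ m ih =>
    have h2 : ((2:ℝ)^(m+1) * s) = 2 * ((2:ℝ)^m * s) := by ring
    have hpos : 0 < (2:ℝ)^m * s := by positivity
    calc μ (ball x ((2:ℝ)^(m+1) * s)) = μ (ball x (2 * ((2:ℝ)^m * s))) := by rw [h2]
      _ ≤ ENNReal.ofReal C_D * μ (ball x ((2:ℝ)^m * s)) := hdoub x _ hpos
      _ ≤ ENNReal.ofReal C_D * (ENNReal.ofReal (C_D ^ m) * μ (ball x s)) := by
          exact mul_le_mul_right ih _
      _ = ENNReal.ofReal (C_D ^ (m+1)) * μ (ball x s) := by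
          rw [← mul_assoc, ← ENNReal.ofReal_mul (by linarith), pow_succ, mul_comm (C_D^m)]

/-- comparing measures of two balls -/
lemma PIaux.ball_compare {C_D : ℝ} (hCD : 1 ≤ C_D)
    (hdoub : ∀ (x : X) (r : ℝ), 0 < r → μ (ball x (2 * r)) ≤ ENNReal.ofReal C_D * μ (ball x r))
    {p q : X} {t s : ℝ} (hs : 0 < s) {m : ℕ} (h : t + dist p q ≤ (2:ℝ)^m * s) :
    μ (ball p t) ≤ ENNReal.ofReal (C_D ^ m) * μ (ball q s) := by
  have hsub : ball p t ⊆ ball q ((2:ℝ)^m * s) := by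
    intro y hy
    have : dist y q ≤ dist y p + dist p q := dist_triangle y p q
    have : dist y q < t + dist p q := by
      have := mem_ball.mp hy; linarith [dist_triangle y p q]
    exact mem_ball.mpr (lt_of_lt_of_le this h)
  exact le_trans (measure_mono hsub) (PIaux.doubling_pow hCD hdoub q s hs m)

/-- average over a subset is controlled by the average over the big set -/
lemma PIaux.avg_subset_le {s t : Set X} (hst : s ⊆ t) (h : X → ℝ) (h0 : ∀ y, 0 ≤ h y)
    (hint : IntegrableOn h t μ) (hs : 0 < μ s) (ht : μ t < ⊤) {K : ℝ} (hK : 0 ≤ K)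
    (hμ : μ t ≤ ENNReal.ofReal K * μ s) :
    ⨍ y in s, h y ∂μ ≤ K * ⨍ y in t, h y ∂μ := by
  have hsfin : μ s < ⊤ := lt_of_le_of_lt (measure_mono hst) ht
  have hsr : 0 < (μ s).toReal := ENNReal.toReal_pos hs.ne' hsfin.ne
  have htr : 0 < (μ t).toReal := ENNReal.toReal_pos (lt_of_lt_of_le hs (measure_mono hst)).ne' ht.ne
  have hIle : ∫ y in s, h y ∂μ ≤ ∫ y in t, h y ∂μ := by
    refine setIntegral_mono_set hint ?_ (HasSubset.Subset.eventuallyLE hst)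
    exact Filter.Eventually.of_forall h0
  have hI0 : 0 ≤ ∫ y in t, h y ∂μ := integral_nonneg (fun y => h0 y)
  have hμr : (μ t).toReal ≤ K * (μ s).toReal := by
    have := ENNReal.toReal_mono
      (ENNReal.mul_ne_top ENNReal.ofReal_ne_top hsfin.ne) hμ
    rwa [ENNReal.toReal_mul, ENNReal.toReal_ofReal hK] at this
  rw [setAverage_eq, setAverage_eq, smul_eq_mul, smul_eq_mul]
  calc (μ s).toReal⁻¹ * ∫ y in s, h y ∂μ ≤ (μ s).toReal⁻¹ * ∫ y in t, h y ∂μ := by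
        exact mul_le_mul_of_nonneg_left hIle (by positivity)
    _ ≤ (K * (μ t).toReal⁻¹) * ∫ y in t, h y ∂μ := by
        refine mul_le_mul_of_nonneg_right ?_ hI0
        nlinarith [mul_inv_cancel₀ hsr.ne', mul_inv_cancel₀ htr.ne', hμr,
          mul_pos hsr htr, inv_pos.mpr hsr, inv_pos.mpr htr,
          mul_pos (inv_pos.mpr hsr) (inv_pos.mpr htr)]
    _ = K * ((μ t).toReal⁻¹ * ∫ y in t, h y ∂μ) := by ring

/-- |average - a| ≤ average of |f - a| -/
lemma PIaux.abs_avg_sub {s : Set X} (hs : 0 < μ s) (hsfin : μ s < ⊤) {f : X → ℝ}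
    (hint : IntegrableOn f s μ) (a : ℝ) :
    |(⨍ y in s, f y ∂μ) - a| ≤ ⨍ y in s, |f y - a| ∂μ := by
  have hconst : IntegrableOn (fun _ : X => a) s μ := integrableOn_const hsfin.ne
  have hsub : IntegrableOn (fun y => f y - a) s μ := hint.sub hconst
  have h1 : (⨍ y in s, f y ∂μ) - a = ⨍ y in s, (f y - a) ∂μ := by
    rw [setAverage_eq, setAverage_eq, smul_eq_mul, smul_eq_mul,
      integral_sub hint hconst, setIntegral_const, smul_eq_mul, mul_sub]
    have : 0 < μ.real s := ENNReal.toReal_pos hs.ne' hsfin.ne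
    field_simp
  rw [h1, setAverage_eq, setAverage_eq, smul_eq_mul, smul_eq_mul]
  have h2 : |(μ s).toReal⁻¹ * ∫ y in s, (f y - a) ∂μ| ≤
      (μ s).toReal⁻¹ * ∫ y in s, |f y - a| ∂μ := by
    rw [abs_mul, abs_of_nonneg (by positivity : (0:ℝ) ≤ (μ s).toReal⁻¹)]
    exact mul_le_mul_of_nonneg_left
      (by simpa [Real.norm_eq_abs] using norm_integral_le_integral_norm (μ := μ.restrict s) (fun y => f y - a)) (by positivity)
  exact h2

/-- integral over finite union bounded by sum of integrals, for nonneg integrands -/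
lemma PIaux.integral_biUnion_le {ι : Type*} (s : Finset ι) (t : ι → Set X)
    (htm : ∀ i, MeasurableSet (t i)) {h : X → ℝ} (h0 : ∀ y, 0 ≤ h y)
    :
    (∀ i ∈ s, IntegrableOn h (t i) μ) →
    ∫ y in ⋃ i ∈ s, t i, h y ∂μ ≤ ∑ i ∈ s, ∫ y in t i, h y ∂μ := by
  classical
  induction s using Finset.induction_on with
  | empty => simp
  | @insert a s hnotmem ih =>
    intro hint
    have hintU : IntegrableOn h (⋃ i ∈ s, t i) μ :=
      integrableOn_finset_iUnion.2 (fun i hi => hint i (Finset.mem_insert_of_mem hi))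
    have hinta : IntegrableOn h (t a) μ := hint a (Finset.mem_insert_self a s)
    have hUm : MeasurableSet (⋃ i ∈ s, t i) := Finset.measurableSet_biUnion s (fun i _ => htm i)
    have heq : (⋃ i ∈ insert a s, t i) = t a ∪ ((⋃ i ∈ s, t i) \ t a) := by
      rw [Finset.set_biUnion_insert, union_diff_self]
    rw [heq, setIntegral_union disjoint_sdiff_self_right (hUm.diff (htm a)) hinta
      (hintU.mono_set diff_subset)]
    rw [Finset.sum_insert hnotmem]
    refine add_le_add le_rfl ?_
    refine le_trans (setIntegral_mono_set hintU (Filter.Eventually.of_forall h0)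
      (HasSubset.Subset.eventuallyLE diff_subset)) (ih (fun i hi => hint i (Finset.mem_insert_of_mem hi)))

/-- telescoping chain bound -/
lemma PIaux.chain_bound (F : ℕ → ℝ) (E : ℝ) :
    ∀ M : ℕ, (∀ j < M, |F j - F (j+1)| ≤ E) → |F 0 - F M| ≤ M * E := by
  intro M
  induction M with
  | zero => simp
  | succ M ih =>
    intro hstep
    have h1 : |F 0 - F M| ≤ M * E := ih (fun j hj => hstep j (Nat.lt_succ_of_lt hj))
    have h2 : |F M - F (M+1)| ≤ E := hstep M (Nat.lt_succ_self M)
    calc |F 0 - F (M+1)| ≤ |F 0 - F M| + |F M - F (M+1)| := abs_sub_le _ _ _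
      _ ≤ M * E + E := add_le_add h1 h2
      _ = (M+1 : ℕ) * E := by push_cast; ring

/-- existence of a bounded-cardinality cover by small balls -/
lemma PIaux.exists_cover (x : X) (r ρ : ℝ) (hρ : 0 < ρ) (N : ℕ)
    (hcard : ∀ s : Finset X, ↑s ⊆ ball x r →
      (∀ p ∈ s, ∀ q ∈ s, p ≠ q → ρ ≤ dist p q) → s.card ≤ N) :
    ∃ s : Finset X, ↑s ⊆ ball x r ∧ s.card ≤ N ∧ ball x r ⊆ ⋃ z ∈ s, ball z ρ := by
  classical
  set P : ℕ → Prop := fun n => ∃ s : Finset X, ↑s ⊆ ball x r ∧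
    (∀ p ∈ s, ∀ q ∈ s, p ≠ q → ρ ≤ dist p q) ∧ s.card = n with hP
  have hP0 : P 0 := ⟨∅, by simp, by simp, rfl⟩
  obtain ⟨s, hs1, hs2, hs3⟩ := Nat.findGreatest_spec (P := P) (Nat.zero_le N) hP0
  refine ⟨s, hs1, hcard s hs1 hs2, ?_⟩
  intro y hy
  by_contra hyc
  have hway : ∀ z ∈ s, ρ ≤ dist y z := by
    intro z hz
    by_contra hlt
    exact hyc (mem_biUnion hz (mem_ball.mpr (not_le.1 hlt)))
  have hynotin : y ∉ s := by
    intro hyin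
    have := hway y hyin
    simp at this; linarith
  set s' : Finset X := insert y s with hs'
  have hs'1 : ↑s' ⊆ ball x r := by
    intro z hz
    rcases Finset.mem_insert.1 hz with h | h
    · subst h; exact hy
    · exact hs1 h
  have hs'2 : ∀ p ∈ s', ∀ q ∈ s', p ≠ q → ρ ≤ dist p q := by
    intro p hp q hq hpq
    rcases Finset.mem_insert.1 hp with h | h <;> rcases Finset.mem_insert.1 hq with h' | h'
    · subst h; subst h'; exact absurd rfl hpq
    · subst h; exact hway q h'
    · subst h'; rw [dist_comm]; exact hway p h
    · exact hs2 p h q h' hpq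
  have hcard' : s'.card = s.card + 1 := Finset.card_insert_of_notMem hynotin
  have hle : s'.card ≤ N := hcard s' hs'1 hs'2
  have : s'.card ≤ Nat.findGreatest P N :=
    Nat.le_findGreatest hle ⟨s', hs'1, hs'2, rfl⟩
  omega

end Helpers

set_option maxHeartbeats 2000000 in
/-- In a geodesic metric space with a doubling measure that is finite and positive on
balls, a (1,2)-Poincaré inequality holding at scales `r ≤ r₀` propagates to all scales
`r ≤ R`, with a constant depending only on the doubling constant, the small-scale
Poincaré constant, `r₀` and `R`. -/
theorem poincare_inequality_propagates
    {X : Type*} [MetricSpace X] [MeasurableSpace X] [BorelSpace X]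
    (μ : Measure X)
    (hgeo : ∀ x y : X, ∃ γ : ℝ → X, γ 0 = x ∧ γ (dist x y) = y ∧
      ∀ s ∈ Icc (0 : ℝ) (dist x y), ∀ t ∈ Icc (0 : ℝ) (dist x y),
        dist (γ s) (γ t) = |s - t|)
    (hfin : ∀ (x : X) (r : ℝ), 0 < r → μ (ball x r) < ⊤)
    (hpos : ∀ (x : X) (r : ℝ), 0 < r → 0 < μ (ball x r))
    (C_D : ℝ) (hCD : 1 ≤ C_D)
    (hdoub : ∀ (x : X) (r : ℝ), 0 < r →
      μ (ball x (2 * r)) ≤ ENNReal.ofReal C_D * μ (ball x r))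
    (r₀ C₀ R : ℝ) (hr₀ : 0 < r₀) (hC₀ : 0 < C₀) (hR : 0 < R) :
    ∃ c : ℝ, 0 < c ∧
      ∀ f g : X → ℝ,
        (∀ (x : X) (r : ℝ), 0 < r → IntegrableOn f (ball x r) μ) →
        (∀ x, 0 ≤ g x) →
        (∀ (x : X) (r : ℝ), 0 < r → IntegrableOn (fun y => (g y) ^ 2) (ball x r) μ) →
        (∀ (x : X) (r : ℝ), 0 < r → r ≤ r₀ →
          (⨍ y in ball x r, |f y - ⨍ z in ball x r, f z ∂μ| ∂μ) ≤
            C₀ * r * (⨍ y in ball x (2 * r), (g y) ^ 2 ∂μ) ^ (1/2 : ℝ)) →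
        ∀ (x : X) (r : ℝ), 0 < r → r ≤ R →
          (⨍ y in ball x r, |f y - ⨍ z in ball x r, f z ∂μ| ∂μ) ≤
            c * r * (⨍ y in ball x (2 * r), (g y) ^ 2 ∂μ) ^ (1/2 : ℝ) := by
  classical
  have hCD0 : (0:ℝ) < C_D := lt_of_lt_of_le one_pos hCD
  set ρ : ℝ := r₀ / 4 with hρdef
  have hρ : 0 < ρ := by positivity
  obtain ⟨m, hm⟩ : ∃ m : ℕ, 24 * R / r₀ < 2 ^ m :=
    pow_unbounded_of_one_lt (24 * R / r₀) one_lt_two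
  set Kb : ℝ := C_D ^ m with hKbdef
  have hKb1 : 1 ≤ Kb := one_le_pow₀ hCD
  have hKb0 : 0 < Kb := lt_of_lt_of_le one_pos hKb1
  set M : ℕ := Nat.ceil (8 * R / r₀) + 1 with hMdef
  set N : ℕ := Nat.ceil Kb with hNdef
  have hN1 : 1 ≤ (N:ℝ) := by
    have h1 : 1 ≤ Nat.ceil Kb := Nat.one_le_ceil_iff.mpr hKb0
    exact_mod_cast h1
  have hsqKb : 0 < Real.sqrt Kb := Real.sqrt_pos.mpr hKb0
  set P₀c : ℝ := C₀ * ρ * Real.sqrt Kb with hP₀def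
  have hP₀c : 0 < P₀c := by positivity
  set Q₀ : ℝ := P₀c * (1 + 2 * (M:ℝ) * Kb) with hQdef
  have hQ0 : 0 < Q₀ := by positivity
  set c₂ : ℝ := 2 * C_D * (N:ℝ) * Q₀ / r₀ with hc₂def
  have hc₂ : 0 < c₂ := by positivity
  refine ⟨max C₀ c₂, lt_of_lt_of_le hC₀ (le_max_left _ _), ?_⟩
  intro f g hf hg0 hg2 hPI x r hr hrR
  -- nonnegativity of squared averages
  have havgnn : ∀ (p : X) (t : ℝ), 0 ≤ ⨍ y in ball p t, g y ^ 2 ∂μ := by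
    intro p t
    rw [setAverage_eq, smul_eq_mul]
    exact mul_nonneg (by positivity) (integral_nonneg (fun y => sq_nonneg _))
  set G : ℝ := (⨍ y in ball x (2 * r), g y ^ 2 ∂μ) ^ (1/2 : ℝ) with hGdef
  have hG0 : 0 ≤ G := Real.rpow_nonneg (havgnn x (2*r)) _
  by_cases hsmall : r ≤ r₀
  · refine le_trans (hPI x r hr hsmall) ?_
    have : 0 ≤ r * G := mul_nonneg hr.le hG0
    calc C₀ * r * G = C₀ * (r * G) := by ring
      _ ≤ max C₀ c₂ * (r * G) := mul_le_mul_of_nonneg_right (le_max_left _ _) this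
      _ = max C₀ c₂ * r * G := by ring
  push_neg at hsmall
  -- main case : r₀ < r ≤ R
  have hr2 : 0 < 2 * r := by linarith
  have hμB := hpos x r hr
  have hμBfin := hfin x r hr
  have hμB2 := hpos x (2*r) hr2
  have hμB2fin := hfin x (2*r) hr2
  -- (H1) measure comparability
  have hcomp : ∀ (p : X) (t : ℝ), dist x p ≤ r → r₀/8 ≤ t →
      μ (ball x (2*r)) ≤ ENNReal.ofReal Kb * μ (ball p t) := by
    intro p t hp ht
    have htpos : 0 < t := by linarith
    apply PIaux.ball_compare hCD hdoub htpos (m := m)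
    have h2m0 : (0:ℝ) < 2 ^ m := by positivity
    have h1 : 24 * R < 2 ^ m * r₀ := by
      rw [div_lt_iff₀ hr₀] at hm; linarith
    have h2 : (2:ℝ)^m * (r₀/8) ≥ 3 * R := by linarith
    have h3 : (2:ℝ)^m * (r₀/8) ≤ 2^m * t := by
      exact mul_le_mul_of_nonneg_left ht (by positivity)
    have h4 := hp
    linarith
  -- (H2) inclusion of small balls in B2
  have hsub2 : ∀ (p : X) (t : ℝ), dist x p ≤ r → 0 < t → t ≤ r₀/2 →
      ball p t ⊆ ball x (2*r) := by
    intro p t hp htpos ht y hy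
    have h1 : dist y p < t := mem_ball.mp hy
    have h2 : dist y x ≤ dist y p + dist p x := dist_triangle y p x
    have := dist_comm x p
    have : dist y x < 2 * r := by
      rw [dist_comm p x] at h2; linarith
    exact mem_ball.mpr this
  -- (H3) average of g² on small balls controlled by G
  have havgg : ∀ (p : X) (t : ℝ), dist x p ≤ r → r₀/8 ≤ t → t ≤ r₀/2 →
      (⨍ y in ball p t, g y ^ 2 ∂μ) ^ (1/2 : ℝ) ≤ Real.sqrt Kb * G := by
    intro p t hp ht1 ht2
    have htpos : 0 < t := by linarith
    have hb : ⨍ y in ball p t, g y ^ 2 ∂μ ≤ Kb * ⨍ y in ball x (2*r), g y ^ 2 ∂μ :=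
      PIaux.avg_subset_le (hsub2 p t hp htpos ht2) _ (fun y => sq_nonneg _)
        (hg2 x (2*r) hr2) (hpos p t htpos) hμB2fin hKb0.le (hcomp p t hp ht1)
    calc (⨍ y in ball p t, g y ^ 2 ∂μ) ^ (1/2:ℝ)
        ≤ (Kb * ⨍ y in ball x (2*r), g y ^ 2 ∂μ) ^ (1/2:ℝ) :=
          Real.rpow_le_rpow (havgnn p t) hb (by norm_num)
      _ = Real.sqrt Kb * G := by
          rw [Real.mul_rpow hKb0.le (havgnn x (2*r)), hGdef, Real.sqrt_eq_rpow]
  -- (H4) Poincaré on small balls with uniform right-hand side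
  have hPIball : ∀ (p : X) (t : ℝ), dist x p ≤ r → r₀/8 ≤ t → t ≤ r₀/4 →
      ⨍ y in ball p t, |f y - ⨍ z in ball p t, f z ∂μ| ∂μ ≤ P₀c * G := by
    intro p t hp ht1 ht2
    have htpos : 0 < t := by linarith
    have h1 := hPI p t htpos (by linarith)
    have h2 : (⨍ y in ball p (2*t), g y ^ 2 ∂μ) ^ (1/2:ℝ) ≤ Real.sqrt Kb * G :=
      havgg p (2*t) hp (by linarith) (by linarith)
    calc ⨍ y in ball p t, |f y - ⨍ z in ball p t, f z ∂μ| ∂μ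
        ≤ C₀ * t * (⨍ y in ball p (2*t), g y ^ 2 ∂μ) ^ (1/2:ℝ) := h1
      _ ≤ C₀ * t * (Real.sqrt Kb * G) := by
          exact mul_le_mul_of_nonneg_left h2 (by positivity)
      _ ≤ C₀ * ρ * (Real.sqrt Kb * G) := by
          have ht : t ≤ ρ := by rw [hρdef]; linarith
          have h3 : 0 ≤ Real.sqrt Kb * G := by positivity
          exact mul_le_mul_of_nonneg_right
            (mul_le_mul_of_nonneg_left ht hC₀.le) h3
      _ = P₀c * G := by rw [hP₀def]; ring
  -- integrability of |f - a| on balls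
  have hfa : ∀ (p : X) (t : ℝ) (a : ℝ), 0 < t →
      IntegrableOn (fun y => |f y - a|) (ball p t) μ := by
    intro p t a htpos
    exact ((hf p t htpos).sub (integrableOn_const (hfin p t htpos).ne)).abs
  -- (H5) comparing averages over two nearby small balls
  have hpair : ∀ p q : X, dist x p ≤ r → dist x q ≤ r → dist p q ≤ ρ/2 →
      |(⨍ y in ball p ρ, f y ∂μ) - ⨍ y in ball q ρ, f y ∂μ| ≤ 2 * (Kb * (P₀c * G)) := by
    intro p q hxp hxq hpq
    have hρ8 : ρ/2 = r₀/8 := by rw [hρdef]; ring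
    have key : ∀ w : X, dist x w ≤ r → ball q (ρ/2) ⊆ ball w ρ →
        |(⨍ y in ball q (ρ/2), f y ∂μ) - ⨍ y in ball w ρ, f y ∂μ| ≤ Kb * (P₀c * G) := by
      intro w hxw hsubw
      set a : ℝ := ⨍ y in ball w ρ, f y ∂μ with hadef
      have h1 : |(⨍ y in ball q (ρ/2), f y ∂μ) - a| ≤ ⨍ y in ball q (ρ/2), |f y - a| ∂μ :=
        PIaux.abs_avg_sub (hpos q (ρ/2) (by positivity)) (hfin q (ρ/2) (by positivity))
          (hf q (ρ/2) (by positivity)) a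
      have hμw : μ (ball w ρ) ≤ ENNReal.ofReal Kb * μ (ball q (ρ/2)) := by
        refine le_trans (measure_mono (hsub2 w ρ hxw hρ (by rw [hρdef]; linarith))) ?_
        exact hcomp q (ρ/2) hxq (by rw [hρ8])
      have h2 : ⨍ y in ball q (ρ/2), |f y - a| ∂μ ≤ Kb * ⨍ y in ball w ρ, |f y - a| ∂μ :=
        PIaux.avg_subset_le hsubw _ (fun y => abs_nonneg _) (hfa w ρ a hρ)
          (hpos q (ρ/2) (by positivity)) (hfin w ρ hρ) hKb0.le hμw
      have h3 : ⨍ y in ball w ρ, |f y - a| ∂μ ≤ P₀c * G :=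
        hPIball w ρ hxw (by rw [hρdef]; linarith) (by rw [hρdef])
      calc |(⨍ y in ball q (ρ/2), f y ∂μ) - a| ≤ ⨍ y in ball q (ρ/2), |f y - a| ∂μ := h1
        _ ≤ Kb * ⨍ y in ball w ρ, |f y - a| ∂μ := h2
        _ ≤ Kb * (P₀c * G) := mul_le_mul_of_nonneg_left h3 hKb0.le
    have hsubp : ball q (ρ/2) ⊆ ball p ρ := by
      intro y hy
      have h1 : dist y q < ρ/2 := mem_ball.mp hy
      have h2 : dist y p ≤ dist y q + dist q p := dist_triangle y q p
      have h3 : dist q p = dist p q := dist_comm q p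
      exact mem_ball.mpr (by linarith)
    have hsubq : ball q (ρ/2) ⊆ ball q ρ := ball_subset_ball (by linarith)
    have hp' := key p hxp hsubp
    have hq' := key q hxq hsubq
    calc |(⨍ y in ball p ρ, f y ∂μ) - ⨍ y in ball q ρ, f y ∂μ|
        ≤ |(⨍ y in ball q (ρ/2), f y ∂μ) - ⨍ y in ball p ρ, f y ∂μ| +
          |(⨍ y in ball q (ρ/2), f y ∂μ) - ⨍ y in ball q ρ, f y ∂μ| := by
          rw [abs_sub_comm (⨍ y in ball q (ρ/2), f y ∂μ)]
          exact abs_sub_le _ _ _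
      _ ≤ Kb * (P₀c * G) + Kb * (P₀c * G) := add_le_add hp' hq'
      _ = 2 * (Kb * (P₀c * G)) := by ring
  -- (H6) chain along geodesics
  have hchain : ∀ z : X, dist x z < r →
      |(⨍ y in ball x ρ, f y ∂μ) - ⨍ y in ball z ρ, f y ∂μ| ≤
        (M:ℝ) * (2 * (Kb * (P₀c * G))) := by
    intro z hz
    obtain ⟨γ, hγ0, hγL, hγiso⟩ := hgeo x z
    set L : ℝ := dist x z with hLdef
    have hL0 : 0 ≤ L := dist_nonneg
    set y : ℕ → X := fun j => γ (min ((j:ℝ) * (ρ/2)) L) with hydef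
    have hmem : ∀ j : ℕ, min ((j:ℝ) * (ρ/2)) L ∈ Icc (0:ℝ) L := by
      intro j
      constructor
      · exact le_min (by positivity) hL0
      · exact min_le_right _ _
    have hdxy : ∀ j : ℕ, dist x (y j) ≤ r := by
      intro j
      have h0mem : (0:ℝ) ∈ Icc (0:ℝ) L := ⟨le_refl _, hL0⟩
      have := hγiso 0 h0mem _ (hmem j)
      rw [hγ0] at this
      have habs : |0 - min ((j:ℝ) * (ρ/2)) L| = min ((j:ℝ) * (ρ/2)) L := by
        rw [zero_sub, abs_neg, abs_of_nonneg (le_min (by positivity) hL0)]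
      rw [hydef]
      simp only []
      rw [this, habs]
      exact le_trans (min_le_right _ _) (le_of_lt hz)
    have hdyy : ∀ j : ℕ, dist (y j) (y (j+1)) ≤ ρ/2 := by
      intro j
      have := hγiso _ (hmem j) _ (hmem (j+1))
      rw [hydef]
      simp only []
      rw [this]
      have hmono : min ((j:ℝ) * (ρ/2)) L ≤ min (((j:ℝ)+1) * (ρ/2)) L := by
        refine min_le_min ?_ le_rfl
        nlinarith
      have hstep : min (((j:ℝ)+1) * (ρ/2)) L ≤ min ((j:ℝ) * (ρ/2)) L + ρ/2 := by
        rcases le_total (((j:ℝ)+1) * (ρ/2)) L with h | h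
        · rw [min_eq_left h]
          have : (j:ℝ) * (ρ/2) ≤ min ((j:ℝ) * (ρ/2)) L + 0 → True := fun _ => trivial
          rcases le_total ((j:ℝ) * (ρ/2)) L with h' | h'
          · rw [min_eq_left h']; linarith
          · rw [min_eq_right h']; linarith
        · rw [min_eq_right h]
          rcases le_total ((j:ℝ) * (ρ/2)) L with h' | h'
          · rw [min_eq_left h']; linarith
          · rw [min_eq_right h']; linarith
      have hcast : ((j+1 : ℕ):ℝ) = (j:ℝ) + 1 := by push_cast; ring
      rw [hcast, abs_of_nonpos (by linarith)]
      linarith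
    have hy0 : y 0 = x := by
      rw [hydef]
      simp only []
      rw [show ((0:ℕ):ℝ) * (ρ/2) = 0 by simp, min_eq_left hL0, hγ0]
    have hyM : y M = z := by
      rw [hydef]
      simp only []
      have hMbig : L ≤ (M:ℝ) * (ρ/2) := by
        have h1 : (8 * R / r₀ : ℝ) ≤ Nat.ceil (8 * R / r₀) := Nat.le_ceil _
        have h2 : ((M:ℕ):ℝ) = (Nat.ceil (8 * R / r₀) : ℝ) + 1 := by
          rw [hMdef]; push_cast; ring
        have h3 : 8 * R / r₀ ≤ (M:ℝ) := by rw [h2]; linarith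
        have h4 : 8 * R ≤ (M:ℝ) * r₀ := by
          rw [div_le_iff₀ hr₀] at h3; linarith
        have h5 : (M:ℝ) * (ρ/2) = (M:ℝ) * r₀ / 8 := by rw [hρdef]; ring
        have hLr : L < r := hz
        rw [h5]
        linarith
      rw [min_eq_right hMbig, hγL]
    have hstepj : ∀ j < M, |(⨍ w in ball (y j) ρ, f w ∂μ) - ⨍ w in ball (y (j+1)) ρ, f w ∂μ| ≤
        2 * (Kb * (P₀c * G)) := by
      intro j _
      exact hpair (y j) (y (j+1)) (hdxy j) (hdxy (j+1)) (hdyy j)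
    have := PIaux.chain_bound (fun j => ⨍ w in ball (y j) ρ, f w ∂μ)
      (2 * (Kb * (P₀c * G))) M hstepj
    simp only [hy0, hyM] at this
    exact this
  -- cardinality bound for separated sets
  have hρ8 : (ρ/2 : ℝ) = r₀/8 := by rw [hρdef]; ring
  have hcardb : ∀ s : Finset X, ↑s ⊆ ball x r →
      (∀ p ∈ s, ∀ q ∈ s, p ≠ q → ρ ≤ dist p q) → s.card ≤ N := by
    intro s hs1 hs2
    have hdisj : (↑s : Set X).PairwiseDisjoint (fun z => ball z (ρ/2)) := by
      intro p hp q hq hpq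
      have := hs2 p hp q hq hpq
      exact ball_disjoint_ball (by linarith)
    have hmeas : ∀ b ∈ s, MeasurableSet (ball b (ρ/2)) := fun b _ => measurableSet_ball
    have hUsub : (⋃ z ∈ s, ball z (ρ/2)) ⊆ ball x (2*r) := by
      intro w hw
      simp only [mem_iUnion] at hw
      obtain ⟨z, hz, hw'⟩ := hw
      have hxz : dist x z ≤ r := by
        rw [dist_comm]; exact le_of_lt (mem_ball.mp (hs1 hz))
      exact hsub2 z (ρ/2) hxz (by positivity) (by rw [hρ8]; linarith) hw'
    have hsum : (s.card : ENNReal) * μ (ball x (2*r)) ≤ ENNReal.ofReal Kb * μ (ball x (2*r)) := by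
      calc (s.card : ENNReal) * μ (ball x (2*r)) = ∑ z ∈ s, μ (ball x (2*r)) := by
            rw [Finset.sum_const, nsmul_eq_mul]
        _ ≤ ∑ z ∈ s, ENNReal.ofReal Kb * μ (ball z (ρ/2)) := by
            refine Finset.sum_le_sum (fun z hz => ?_)
            have hxz : dist x z ≤ r := by
              rw [dist_comm]; exact le_of_lt (mem_ball.mp (hs1 hz))
            exact hcomp z (ρ/2) hxz (by rw [hρ8])
        _ = ENNReal.ofReal Kb * ∑ z ∈ s, μ (ball z (ρ/2)) := by rw [Finset.mul_sum]
        _ = ENNReal.ofReal Kb * μ (⋃ z ∈ s, ball z (ρ/2)) := by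
            rw [measure_biUnion_finset hdisj hmeas]
        _ ≤ ENNReal.ofReal Kb * μ (ball x (2*r)) := mul_le_mul_right (measure_mono hUsub) _
    have hcan : (s.card : ENNReal) ≤ ENNReal.ofReal Kb :=
      (ENNReal.mul_le_mul_iff_left hμB2.ne' hμB2fin.ne).mp hsum
    have hcr : (s.card : ℝ) ≤ Kb := by
      have := ENNReal.toReal_mono ENNReal.ofReal_ne_top hcan
      rwa [show ((s.card : ENNReal)).toReal = (s.card : ℝ) from rfl, ENNReal.toReal_ofReal hKb0.le] at this
    have : (s.card : ℝ) ≤ (N:ℝ) := le_trans hcr (Nat.le_ceil Kb)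
    exact_mod_cast this
  obtain ⟨s, hsB, hsN, hscov⟩ := PIaux.exists_cover x r ρ hρ N hcardb
  set A : ℝ := ⨍ y in ball x ρ, f y ∂μ with hAdef
  -- per-ball integral bound
  have hball : ∀ z ∈ s, ∫ y in ball z ρ, |f y - A| ∂μ ≤
      (μ (ball x (2*r))).toReal * (Q₀ * G) := by
    intro z hz
    have hz' : dist x z < r := by rw [dist_comm]; exact mem_ball.mp (hsB hz)
    have hxz : dist x z ≤ r := le_of_lt hz'
    set az : ℝ := ⨍ w in ball z ρ, f w ∂μ with hazdef
    have hint1 : IntegrableOn (fun y => |f y - az|) (ball z ρ) μ := hfa z ρ az hρ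
    have hc : IntegrableOn (fun _ : X => |az - A|) (ball z ρ) μ :=
      integrableOn_const (hfin z ρ hρ).ne
    have h1 : ∫ y in ball z ρ, |f y - A| ∂μ ≤
        ∫ y in ball z ρ, (|f y - az| + |az - A|) ∂μ :=
      integral_mono (hfa z ρ A hρ) (hint1.add hc) (fun y => abs_sub_le _ _ _)
    have h2 : ∫ y in ball z ρ, (|f y - az| + |az - A|) ∂μ =
        ∫ y in ball z ρ, |f y - az| ∂μ + (μ (ball z ρ)).toReal * |az - A| := by
      rw [integral_add hint1 hc, setIntegral_const, smul_eq_mul]; rfl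
    have hμzpos : 0 < (μ (ball z ρ)).toReal :=
      ENNReal.toReal_pos (hpos z ρ hρ).ne' (hfin z ρ hρ).ne
    have h3 : ∫ y in ball z ρ, |f y - az| ∂μ =
        (μ (ball z ρ)).toReal * ⨍ y in ball z ρ, |f y - az| ∂μ := by
      rw [setAverage_eq, smul_eq_mul, measureReal_def, ← mul_assoc, mul_inv_cancel₀ hμzpos.ne', one_mul]
    have h4 : ⨍ y in ball z ρ, |f y - az| ∂μ ≤ P₀c * G :=
      hPIball z ρ hxz (by rw [hρdef]; linarith) (by rw [hρdef])
    have h5 : |az - A| ≤ (M:ℝ) * (2 * (Kb * (P₀c * G))) := by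
      rw [abs_sub_comm]; exact hchain z hz'
    have hμz : (μ (ball z ρ)).toReal ≤ (μ (ball x (2*r))).toReal :=
      ENNReal.toReal_mono hμB2fin.ne
        (measure_mono (hsub2 z ρ hxz hρ (by rw [hρdef]; linarith)))
    have hQtnn : 0 ≤ P₀c * G + (M:ℝ) * (2 * (Kb * (P₀c * G))) := by positivity
    calc ∫ y in ball z ρ, |f y - A| ∂μ
        ≤ ∫ y in ball z ρ, |f y - az| ∂μ + (μ (ball z ρ)).toReal * |az - A| := by
          rw [← h2]; exact h1
      _ = (μ (ball z ρ)).toReal * (⨍ y in ball z ρ, |f y - az| ∂μ + |az - A|) := by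
          rw [h3]; ring
      _ ≤ (μ (ball z ρ)).toReal * (P₀c * G + (M:ℝ) * (2 * (Kb * (P₀c * G)))) :=
          mul_le_mul_of_nonneg_left (add_le_add h4 h5) hμzpos.le
      _ ≤ (μ (ball x (2*r))).toReal * (P₀c * G + (M:ℝ) * (2 * (Kb * (P₀c * G)))) :=
          mul_le_mul_of_nonneg_right hμz hQtnn
      _ = (μ (ball x (2*r))).toReal * (Q₀ * G) := by rw [hQdef]; ring
  -- summing over the cover
  have hcover : ∫ y in ball x r, |f y - A| ∂μ ≤
      (N:ℝ) * ((μ (ball x (2*r))).toReal * (Q₀ * G)) := by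
    have hintU : IntegrableOn (fun y => |f y - A|) (⋃ z ∈ s, ball z ρ) μ :=
      integrableOn_finset_iUnion.2 (fun z _ => hfa z ρ A hρ)
    have h1 : ∫ y in ball x r, |f y - A| ∂μ ≤ ∫ y in ⋃ z ∈ s, ball z ρ, |f y - A| ∂μ :=
      setIntegral_mono_set hintU (Filter.Eventually.of_forall fun y => abs_nonneg _)
        (HasSubset.Subset.eventuallyLE hscov)
    have h2 := PIaux.integral_biUnion_le s (fun z => ball z ρ)
      (fun z => measurableSet_ball) (fun y => abs_nonneg _) (fun z hz => hfa z ρ A hρ)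
    have h3 : ∑ z ∈ s, ∫ y in ball z ρ, |f y - A| ∂μ ≤
        (s.card : ℝ) * ((μ (ball x (2*r))).toReal * (Q₀ * G)) := by
      calc ∑ z ∈ s, ∫ y in ball z ρ, |f y - A| ∂μ
          ≤ ∑ z ∈ s, (μ (ball x (2*r))).toReal * (Q₀ * G) := Finset.sum_le_sum hball
        _ = (s.card : ℝ) * ((μ (ball x (2*r))).toReal * (Q₀ * G)) := by
            rw [Finset.sum_const, nsmul_eq_mul]
    have hcard : (s.card : ℝ) ≤ (N:ℝ) := by exact_mod_cast hsN
    have h4 : (s.card : ℝ) * ((μ (ball x (2*r))).toReal * (Q₀ * G)) ≤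
        (N:ℝ) * ((μ (ball x (2*r))).toReal * (Q₀ * G)) :=
      mul_le_mul_of_nonneg_right hcard (by positivity)
    linarith
  -- final assembly
  set fB : ℝ := ⨍ z in ball x r, f z ∂μ with hfBdef
  have hBpos : 0 < (μ (ball x r)).toReal := ENNReal.toReal_pos hμB.ne' hμBfin.ne
  have hintfA : IntegrableOn (fun y => |f y - A|) (ball x r) μ := hfa x r A hr
  have hintfB : IntegrableOn (fun y => |f y - fB|) (ball x r) μ := hfa x r fB hr
  have hintc : IntegrableOn (fun _ : X => |fB - A|) (ball x r) μ :=
    integrableOn_const hμBfin.ne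
  have habsBA : |fB - A| ≤ ⨍ y in ball x r, |f y - A| ∂μ :=
    PIaux.abs_avg_sub hμB hμBfin (hf x r hr) A
  have h2avg : ⨍ y in ball x r, |f y - fB| ∂μ ≤ 2 * ⨍ y in ball x r, |f y - A| ∂μ := by
    have hmono : ⨍ y in ball x r, |f y - fB| ∂μ ≤
        ⨍ y in ball x r, (|f y - A| + |fB - A|) ∂μ := by
      rw [setAverage_eq, setAverage_eq, smul_eq_mul, smul_eq_mul]
      refine mul_le_mul_of_nonneg_left ?_ (by positivity)
      refine integral_mono hintfB (hintfA.add hintc) (fun y => ?_)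
      calc |f y - fB| ≤ |f y - A| + |A - fB| := abs_sub_le _ _ _
        _ = |f y - A| + |fB - A| := by rw [abs_sub_comm A fB]
    have heq : ⨍ y in ball x r, (|f y - A| + |fB - A|) ∂μ =
        (⨍ y in ball x r, |f y - A| ∂μ) + |fB - A| := by
      rw [setAverage_eq, setAverage_eq, smul_eq_mul, smul_eq_mul,
        integral_add hintfA hintc, setIntegral_const, smul_eq_mul, measureReal_def,
        mul_add, ← mul_assoc, inv_mul_cancel₀ hBpos.ne', one_mul]
    rw [heq] at hmono
    linarith
  have hdr : (μ (ball x (2*r))).toReal ≤ C_D * (μ (ball x r)).toReal := by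
    have h := ENNReal.toReal_mono
      (ENNReal.mul_ne_top ENNReal.ofReal_ne_top hμBfin.ne) (hdoub x r hr)
    rwa [ENNReal.toReal_mul, ENNReal.toReal_ofReal hCD0.le] at h
  have hkey : (μ (ball x r)).toReal⁻¹ * (μ (ball x (2*r))).toReal ≤ C_D := by
    rw [inv_mul_le_iff₀ hBpos]
    nlinarith [hBpos]
  calc ⨍ y in ball x r, |f y - fB| ∂μ ≤ 2 * ⨍ y in ball x r, |f y - A| ∂μ := h2avg
    _ = 2 * ((μ (ball x r)).toReal⁻¹ * ∫ y in ball x r, |f y - A| ∂μ) := by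
        rw [setAverage_eq, smul_eq_mul, measureReal_def]
    _ ≤ 2 * ((μ (ball x r)).toReal⁻¹ * ((N:ℝ) * ((μ (ball x (2*r))).toReal * (Q₀ * G)))) := by
        refine mul_le_mul_of_nonneg_left ?_ (by norm_num)
        exact mul_le_mul_of_nonneg_left hcover (by positivity)
    _ = 2 * (N:ℝ) * (Q₀ * G) * ((μ (ball x r)).toReal⁻¹ * (μ (ball x (2*r))).toReal) := by
        ring
    _ ≤ 2 * (N:ℝ) * (Q₀ * G) * C_D := by
        refine mul_le_mul_of_nonneg_left hkey (by positivity)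
    _ = c₂ * r₀ * G := by rw [hc₂def]; field_simp
    _ ≤ c₂ * r * G := by
        have h1 : c₂ * r₀ ≤ c₂ * r := mul_le_mul_of_nonneg_left hsmall.le hc₂.le
        exact mul_le_mul_of_nonneg_right h1 hG0
    _ ≤ max C₀ c₂ * r * G := by
        exact mul_le_mul_of_nonneg_right
          (mul_le_mul_of_nonneg_right (le_max_right C₀ c₂) hr.le) hG0
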